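/- Let n >= 3 and let k >= n be an integer. Consider the fair-goods instance with n agents and kn + 1 goods e_1, ..., e_{kn+1} where: for each agent i with 1 <= i <= n-2, v_i(e_j) = 1/(nk) for 1 <= j <= kn and v_i(e_{kn+1}) = 0; and for agents i in {n-1, n}, v_i(e_j) = 1/(k n^{k+1}) for 1 <= j <= kn and v_i(e_{kn+1}) = 1 - 1/n^k. Then OPT_E >= (kn - n + 2)/(k n^{k+1}), while every connected MMS allocation A satisfies EW(A) <= 2/n^{k+1}. Consequently the price of MMS with respect to egalitarian welfare for goods is at least (kn - n + 2)/(2k), which tends to n/2 as k tends to infinity. -/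

import Mathlib

open Finset

noncomputable section

/-- The value of a bundle `S` of items under additive (item-level) valuation `v`. -/
def bundleVal {m : ℕ} (v : Fin m → ℝ) (S : Finset (Fin m)) : ℝ := ∑ e ∈ S, v e

/-- A bundle is connected if it is an interval of the line `e_1, …, e_m`. -/
def IsConnBundle {m : ℕ} (S : Finset (Fin m)) : Prop :=
  ∀ a ∈ S, ∀ c ∈ S, ∀ b : Fin m, a ≤ b → b ≤ c → b ∈ S

/-- A connected allocation: pairwise disjoint connected bundles covering all items. -/
def ConnAlloc (n m : ℕ) (A : Fin n → Finset (Fin m)) : Prop :=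
  (∀ i, IsConnBundle (A i)) ∧
  (∀ i j : Fin n, i ≠ j → Disjoint (A i) (A j)) ∧
  (∀ e : Fin m, ∃ i, e ∈ A i)

/-- The maximin share of an agent with valuation `v`: the maximum over connected
`n`-partitions of the minimum bundle value. -/
def mmsVal (n m : ℕ) (v : Fin m → ℝ) : ℝ :=
  sSup { x : ℝ | ∃ A : Fin n → Finset (Fin m), ConnAlloc n m A ∧ x = ⨅ j, bundleVal v (A j) }

/-- Utilitarian welfare of an allocation. -/
def utilW (n m : ℕ) (v : Fin n → Fin m → ℝ) (A : Fin n → Finset (Fin m)) : ℝ :=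
  ∑ i, bundleVal (v i) (A i)

/-- Egalitarian welfare of an allocation. -/
def egalW (n m : ℕ) (v : Fin n → Fin m → ℝ) (A : Fin n → Finset (Fin m)) : ℝ :=
  ⨅ i, bundleVal (v i) (A i)

/-- Optimal utilitarian welfare over all connected allocations. -/
def optU (n m : ℕ) (v : Fin n → Fin m → ℝ) : ℝ :=
  sSup { x : ℝ | ∃ A, ConnAlloc n m A ∧ x = utilW n m v A }

/-- Optimal egalitarian welfare over all connected allocations. -/
def optE (n m : ℕ) (v : Fin n → Fin m → ℝ) : ℝ :=
  sSup { x : ℝ | ∃ A, ConnAlloc n m A ∧ x = egalW n m v A }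

lemma bundleVal_const {m : ℕ} (v : Fin m → ℝ) (S : Finset (Fin m)) (c : ℝ)
    (h : ∀ j ∈ S, v j = c) : bundleVal v S = S.card * c := by
  unfold bundleVal
  rw [Finset.sum_congr rfl h, Finset.sum_const, nsmul_eq_mul]

lemma bundleVal_ite {m t : ℕ} (v : Fin m → ℝ) (S : Finset (Fin m)) (c d : ℝ)
    (h : ∀ j ∈ S, v j = if (j : ℕ) < t then c else d) :
    bundleVal v S = ((S.filter fun j : Fin m => (j : ℕ) < t).card : ℝ) * c
      + ((S.filter fun j : Fin m => ¬ (j : ℕ) < t).card : ℝ) * d := by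
  unfold bundleVal
  rw [Finset.sum_congr rfl h, Finset.sum_ite]
  simp only [Finset.sum_const, nsmul_eq_mul]

lemma connAlloc_of_intervals {n m : ℕ} (lo hi : Fin n → ℕ)
    (hm : ∀ i : Fin n, ∀ a ∈ Finset.Ico (lo i) (hi i), a < m)
    (hsep : ∀ i j : Fin n, i < j → hi i ≤ lo j)
    (hcov : ∀ e : ℕ, e < m → ∃ i : Fin n, lo i ≤ e ∧ e < hi i) :
    ConnAlloc n m (fun i => (Finset.Ico (lo i) (hi i)).attachFin (hm i)) := by
  refine ⟨?_, ?_, ?_⟩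
  · intro i a ha c hc b hab hbc
    simp only [Finset.mem_attachFin, Finset.mem_Ico] at *
    rw [Fin.le_def] at hab hbc
    omega
  · intro i j hij
    rw [Finset.disjoint_left]
    intro x hx hx'
    simp only [Finset.mem_attachFin, Finset.mem_Ico] at hx hx'
    rcases lt_trichotomy i j with h | h | h
    · have := hsep i j h; omega
    · exact hij h
    · have := hsep j i h; omega
  · intro e
    obtain ⟨i, h1, h2⟩ := hcov e e.isLt
    exact ⟨i, by simp [Finset.mem_attachFin, Finset.mem_Ico, h1, h2]⟩

def loB (n M x : ℕ) : ℕ := if x < n-2 then x else if x = n-2 then n-2 else M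
def hiB (n M x : ℕ) : ℕ := if x < n-2 then x+1 else if x = n-2 then M else M+1

lemma hiB_le (n M x : ℕ) (hn : 3 ≤ n) (hnM : n ≤ M) (hx : x < n) : hiB n M x ≤ M + 1 := by
  unfold hiB; split_ifs <;> omega

lemma sepB (n M x y : ℕ) (hn : 3 ≤ n) (hnM : n ≤ M) (hx : x < n) (hy : y < n) (hxy : x < y) :
    hiB n M x ≤ loB n M y := by
  unfold hiB loB; split_ifs <;> omega

lemma covB (n M e : ℕ) (hn : 3 ≤ n) (hnM : n ≤ M) (he : e < M + 1) :
    ∃ x, x < n ∧ loB n M x ≤ e ∧ e < hiB n M x := by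
  refine ⟨if e < n-2 then e else if e < M then n-2 else n-1, ?_, ?_, ?_⟩
  · split_ifs <;> omega
  · simp only [loB]; split_ifs <;> omega
  · simp only [hiB]; split_ifs <;> omega

def loC (k x : ℕ) : ℕ := x * k
def hiC (n k x : ℕ) : ℕ := if x = n-1 then k*n+1 else (x+1)*k

lemma hiC_le (n k x : ℕ) (hn : 3 ≤ n) (hx : x < n) : hiC n k x ≤ k*n+1 := by
  unfold hiC; split_ifs with h
  · exact le_refl _
  · calc (x+1)*k ≤ n*k := Nat.mul_le_mul_right k (by omega)
      _ = k*n := Nat.mul_comm n k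
      _ ≤ k*n+1 := Nat.le_succ _

lemma sepC (n k x y : ℕ) (hx : x < n) (hy : y < n) (hxy : x < y) :
    hiC n k x ≤ loC k y := by
  unfold hiC loC
  rw [if_neg (by omega : ¬ x = n-1)]
  exact Nat.mul_le_mul_right k (by omega)

lemma covC (n k e : ℕ) (hn : 3 ≤ n) (hk0 : 0 < k) (he : e < k*n+1) :
    ∃ x, x < n ∧ loC k x ≤ e ∧ e < hiC n k x := by
  refine ⟨min (e/k) (n-1), by omega, ?_, ?_⟩
  · unfold loC
    calc (min (e/k) (n-1)) * k ≤ (e/k) * k := Nat.mul_le_mul_right k (Nat.min_le_left _ _)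
    _ ≤ e := Nat.div_mul_le_self e k
  · unfold hiC
    by_cases h : e/k ≤ n-1
    · rw [Nat.min_eq_left h]
      by_cases h2 : e/k = n-1
      · rw [if_pos h2]; omega
      · rw [if_neg h2]
        have h1 := Nat.div_add_mod e k
        have h2' : e % k < k := Nat.mod_lt _ hk0
        have : e < k*(e/k) + k := by omega
        calc e < k*(e/k) + k := this
        _ = (e/k+1)*k := by ring
    · rw [Nat.min_eq_right (by omega)]
      rw [if_pos rfl]; omega

lemma card_filter_lt_fin (M : ℕ) :
    ((univ : Finset (Fin (M+1))).filter fun j : Fin (M+1) => (j : ℕ) < M).card = M := by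
  have h : ((univ : Finset (Fin (M+1))).filter fun j : Fin (M+1) => (j : ℕ) < M)
      = (Finset.range M).attachFin (n := M+1) (fun a ha => by simp at ha; omega) := by
    ext j
    simp [Finset.mem_attachFin, Finset.mem_range]
  rw [h, Finset.card_attachFin, Finset.card_range]

lemma nat_kn_le (n k : ℕ) (hn : 3 ≤ n) (hk : n ≤ k) : k*n ≤ n^k := by
  have h1 : k ≤ 2^(k-1) := by have := Nat.lt_two_pow_self (n := k-1); omega
  have h2 : 2^(k-1) ≤ n^(k-1) := Nat.pow_le_pow_left (by omega) _
  calc k*n ≤ n^(k-1)*n := Nat.mul_le_mul_right n (h1.trans h2)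
  _ = n^k := by rw [← pow_succ]; congr 1; omega

/-- The hard instance for Goods | Egalitarian | MMS: with `n ≥ 3` agents
and `kn + 1` goods as described (`k ≥ n`), the optimal egalitarian welfare is at least
`(kn - n + 2)/(k·n^(k+1))`, while every connected MMS allocation has egalitarian welfare
at most `2 / n^(k+1)`. -/
theorem goods_egalitarian_mms_lower_bound (n k : ℕ) (hn : 3 ≤ n) (hk : n ≤ k)
    (v : Fin n → Fin (k * n + 1) → ℝ)
    (hv1 : ∀ i : Fin n, (i : ℕ) < n - 2 → ∀ j : Fin (k * n + 1),
      v i j = if (j : ℕ) < k * n then 1 / ((n : ℝ) * k) else 0)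
    (hv2 : ∀ i : Fin n, n - 2 ≤ (i : ℕ) → ∀ j : Fin (k * n + 1),
      v i j = if (j : ℕ) < k * n then 1 / ((k : ℝ) * (n : ℝ) ^ (k + 1))
              else 1 - 1 / (n : ℝ) ^ k) :
    ((k : ℝ) * n - n + 2) / ((k : ℝ) * (n : ℝ) ^ (k + 1)) ≤ optE n (k * n + 1) v ∧
    ∀ A : Fin n → Finset (Fin (k * n + 1)), ConnAlloc n (k * n + 1) A →
      (∀ i, mmsVal n (k * n + 1) (v i) ≤ bundleVal (v i) (A i)) →
      egalW n (k * n + 1) v A ≤ 2 / (n : ℝ) ^ (k + 1) := by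
  have hn0 : 0 < n := by omega
  have hk0 : 0 < k := by omega
  haveI : Nonempty (Fin n) := ⟨⟨0, hn0⟩⟩
  have hnkn : n ≤ k * n := Nat.le_mul_of_pos_left n hk0
  have hknk : k * n ≤ n ^ k := nat_kn_le n k hn hk
  have hN3 : (3:ℝ) ≤ (n:ℝ) := by exact_mod_cast hn
  have hNpos : (0:ℝ) < (n:ℝ) := by linarith
  have hKpos : (0:ℝ) < (k:ℝ) := by exact_mod_cast hk0
  have hQpos : (0:ℝ) < (n:ℝ)^k := by positivity
  have hPpos : (0:ℝ) < (n:ℝ)^(k+1) := by positivity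
  have hQ2 : (2:ℝ) ≤ (n:ℝ)^k := by
    have h1 : 2 ≤ n^k := le_trans (by omega) (Nat.le_self_pow (by omega) n)
    exact_mod_cast h1
  have hKN : (k:ℝ) * (n:ℝ) ≤ (n:ℝ)^k := by exact_mod_cast hknk
  have hvnn : ∀ i j, 0 ≤ v i j := by
    intro i j
    by_cases hi : (i:ℕ) < n-2
    · rw [hv1 i hi j]; split_ifs
      · positivity
      · exact le_refl 0
    · rw [hv2 i (by omega) j]; split_ifs
      · positivity
      · have h1 : 1/(n:ℝ)^k ≤ 1 := (div_le_one hQpos).2 (by linarith)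
        linarith
  have hbnd : ∀ (i : Fin n) (S : Finset (Fin (k*n+1))),
      bundleVal (v i) S ≤ bundleVal (v i) Finset.univ := fun i S =>
    Finset.sum_le_sum_of_subset_of_nonneg (Finset.subset_univ S) (fun j _ _ => hvnn i j)
  have hT1 : ((k:ℝ) * n - n + 2) / ((k:ℝ) * (n:ℝ)^(k+1)) ≤ 1 / (n:ℝ)^k := by
    rw [div_le_div_iff₀ (by positivity) hQpos, pow_succ]
    nlinarith [mul_nonneg (by linarith : (0:ℝ) ≤ (n:ℝ) - 2) hQpos.le]
  -- Part 1 allocation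
  have hmB : ∀ i : Fin n, ∀ a ∈ Finset.Ico (loB n (k*n) i.val) (hiB n (k*n) i.val), a < k*n+1 :=
    fun i a ha => Nat.lt_of_lt_of_le (Finset.mem_Ico.1 ha).2 (hiB_le n (k*n) i.val hn hnkn i.isLt)
  set B : Fin n → Finset (Fin (k*n+1)) :=
    fun i => (Finset.Ico (loB n (k*n) i.val) (hiB n (k*n) i.val)).attachFin (hmB i) with hBdef
  have hB : ConnAlloc n (k*n+1) B :=
    connAlloc_of_intervals _ _ hmB
      (fun i j hij => sepB n (k*n) i.val j.val hn hnkn i.isLt j.isLt hij)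
      (fun e he => by
        obtain ⟨x, hx, h1, h2⟩ := covB n (k*n) e hn hnkn he
        exact ⟨⟨x, hx⟩, h1, h2⟩)
  have hBval : ∀ i : Fin n,
      ((k:ℝ) * n - n + 2) / ((k:ℝ) * (n:ℝ)^(k+1)) ≤ bundleVal (v i) (B i) := by
    intro i
    have hmem : ∀ j : Fin (k*n+1), j ∈ B i ↔
        loB n (k*n) i.val ≤ (j:ℕ) ∧ (j:ℕ) < hiB n (k*n) i.val := by
      intro j; simp [hBdef, Finset.mem_attachFin, Finset.mem_Ico]
    have hcard : (B i).card = hiB n (k*n) i.val - loB n (k*n) i.val := by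
      simp [hBdef, Finset.card_attachFin, Nat.card_Ico]
    by_cases h1 : i.val < n-2
    · simp only [loB, hiB, if_pos h1] at hmem hcard
      have hval : bundleVal (v i) (B i) = ((B i).card : ℝ) * (1/((n:ℝ)*k)) := by
        apply bundleVal_const
        intro j hj
        rw [hv1 i h1 j, if_pos]
        have hj' := (hmem j).1 hj
        exact lt_of_lt_of_le (by omega : (j:ℕ) < n) hnkn
      have hc1 : (B i).card = 1 := by omega
      rw [hval, hc1]
      push_cast
      rw [one_mul]
      refine hT1.trans (one_div_le_one_div_of_le (by positivity) ?_)
      calc (n:ℝ)*k = k*n := mul_comm _ _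
        _ ≤ (n:ℝ)^k := hKN
    · by_cases h2 : i.val = n-2
      · simp only [loB, hiB, if_neg h1, if_pos h2] at hmem hcard
        have hval : bundleVal (v i) (B i) = ((B i).card : ℝ) * (1/((k:ℝ)*(n:ℝ)^(k+1))) := by
          apply bundleVal_const
          intro j hj
          rw [hv2 i (by omega) j, if_pos ((hmem j).1 hj).2]
        rw [hval, hcard]
        have hcast : ((k*n - (n-2) : ℕ) : ℝ) = (k:ℝ)*n - n + 2 := by
          rw [Nat.cast_sub (le_trans (by omega) hnkn), Nat.cast_sub (by omega : 2 ≤ n)]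
          push_cast; ring
        rw [hcast, mul_one_div]
      · simp only [loB, hiB, if_neg h1, if_neg h2] at hmem hcard
        have hval : bundleVal (v i) (B i) = ((B i).card : ℝ) * (1 - 1/(n:ℝ)^k) := by
          apply bundleVal_const
          intro j hj
          rw [hv2 i (by omega) j, if_neg (Nat.not_lt.2 ((hmem j).1 hj).1)]
        have hc1 : (B i).card = 1 := by rw [hcard, Nat.add_sub_cancel_left]
        rw [hval, hc1]
        push_cast
        rw [one_mul]
        have h1Q : 1/(n:ℝ)^k ≤ 1/2 := by
          apply one_div_le_one_div_of_le (by norm_num) hQ2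
        linarith [hT1]
  constructor
  · have hbddE : BddAbove {x | ∃ A, ConnAlloc n (k*n+1) A ∧ x = egalW n (k*n+1) v A} := by
      refine ⟨bundleVal (v ⟨0, hn0⟩) Finset.univ, ?_⟩
      rintro x ⟨A, hA, rfl⟩
      exact le_trans (ciInf_le (Finite.bddBelow_range _) ⟨0, hn0⟩) (hbnd _ _)
    refine le_trans ?_ (le_csSup hbddE ⟨B, hB, rfl⟩)
    exact le_ciInf hBval
  · intro A hA hmms
    obtain ⟨hconn, hdisj, hcov⟩ := hA
    -- MMS of type-1 agents is at least 1/n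
    have hmms1 : ∀ i : Fin n, (i:ℕ) < n-2 → 1/(n:ℝ) ≤ mmsVal n (k*n+1) (v i) := by
      intro i hi
      have hmC : ∀ x : Fin n, ∀ a ∈ Finset.Ico (loC k x.val) (hiC n k x.val), a < k*n+1 :=
        fun x a ha => Nat.lt_of_lt_of_le (Finset.mem_Ico.1 ha).2 (hiC_le n k x.val hn x.isLt)
      have hC : ConnAlloc n (k*n+1)
          (fun x => (Finset.Ico (loC k x.val) (hiC n k x.val)).attachFin (hmC x)) :=
        connAlloc_of_intervals _ _ hmC
          (fun a b hab => sepC n k a.val b.val a.isLt b.isLt hab)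
          (fun e he => by
            obtain ⟨x, hx, h1, h2⟩ := covC n k e hn hk0 he
            exact ⟨⟨x, hx⟩, h1, h2⟩)
      have hbddM : BddAbove {x | ∃ A : Fin n → Finset (Fin (k*n+1)),
          ConnAlloc n (k*n+1) A ∧ x = ⨅ j, bundleVal (v i) (A j)} := by
        refine ⟨bundleVal (v i) Finset.univ, ?_⟩
        rintro x ⟨A', hA', rfl⟩
        exact le_trans (ciInf_le (Finite.bddBelow_range _) ⟨0, hn0⟩) (hbnd _ _)
      refine le_trans (le_ciInf ?_) (le_csSup hbddM
        ⟨fun x => (Finset.Ico (loC k x.val) (hiC n k x.val)).attachFin (hmC x), hC, rfl⟩)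
      intro x
      have hxk : x.val * k + k ≤ k*n := by
        calc x.val*k + k = (x.val+1)*k := by ring
          _ ≤ n*k := Nat.mul_le_mul_right k x.isLt
          _ = k*n := Nat.mul_comm n k
      have hsubm : ∀ a ∈ Finset.Ico (x.val * k) (x.val * k + k), a < k*n+1 := by
        intro a ha
        exact Nat.lt_of_lt_of_le (Finset.mem_Ico.1 ha).2 (hxk.trans (Nat.le_succ _))
      have hsub : (Finset.Ico (x.val * k) (x.val * k + k)).attachFin hsubm ⊆
          (Finset.Ico (loC k x.val) (hiC n k x.val)).attachFin (hmC x) := by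
        intro j hj
        simp only [Finset.mem_attachFin, Finset.mem_Ico] at hj ⊢
        refine ⟨hj.1, ?_⟩
        unfold hiC
        split_ifs
        · exact j.isLt
        · calc (j:ℕ) < x.val*k + k := hj.2
            _ = (x.val+1)*k := by ring
      have hsubval : bundleVal (v i) ((Finset.Ico (x.val * k) (x.val * k + k)).attachFin hsubm)
          = 1/(n:ℝ) := by
        have hv : bundleVal (v i) ((Finset.Ico (x.val * k) (x.val * k + k)).attachFin hsubm)
            = ((((Finset.Ico (x.val * k) (x.val * k + k)).attachFin hsubm)).card : ℝ)
              * (1/((n:ℝ)*k)) := by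
          apply bundleVal_const
          intro j hj
          rw [hv1 i hi j, if_pos]
          simp only [Finset.mem_attachFin, Finset.mem_Ico] at hj
          exact lt_of_lt_of_le hj.2 hxk
        rw [hv, Finset.card_attachFin, Nat.card_Ico, Nat.add_sub_cancel_left]
        field_simp
      calc 1/(n:ℝ) = _ := hsubval.symm
        _ ≤ _ := Finset.sum_le_sum_of_subset_of_nonneg hsub (fun j _ _ => hvnn i j)
    -- type-1 agents hold at least k early items
    have htype1 : ∀ i : Fin n, (i:ℕ) < n-2 →
        k ≤ ((A i).filter fun j : Fin (k*n+1) => (j:ℕ) < k*n).card := by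
      intro i hi
      have hval : bundleVal (v i) (A i)
          = ((((A i).filter fun j : Fin (k*n+1) => (j:ℕ) < k*n).card : ℕ) : ℝ)
            * (1/((n:ℝ)*k)) := by
        rw [bundleVal_ite (v i) (A i) _ _ (fun j _ => hv1 i hi j), mul_zero, add_zero]
      have hle : 1/(n:ℝ) ≤ ((((A i).filter fun j : Fin (k*n+1) => (j:ℕ) < k*n).card : ℕ) : ℝ)
          * (1/((n:ℝ)*k)) := by
        rw [← hval]; exact le_trans (hmms1 i hi) (hmms i)
      have hfin : (k:ℝ) ≤ ((((A i).filter fun j : Fin (k*n+1) => (j:ℕ) < k*n).card : ℕ) : ℝ) := by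
        rw [mul_one_div, le_div_iff₀ (by positivity)] at hle
        have h' : (1/(n:ℝ)) * ((n:ℝ)*k) = k := by field_simp
        linarith
      exact_mod_cast hfin
    have hsumle : (∑ i, ((A i).filter fun j : Fin (k*n+1) => (j:ℕ) < k*n).card) ≤ k * n := by
      have hdisjF : ∀ x ∈ (univ : Finset (Fin n)), ∀ y ∈ univ, x ≠ y →
          Disjoint ((A x).filter fun j : Fin (k*n+1) => (j:ℕ) < k*n)
                   ((A y).filter fun j : Fin (k*n+1) => (j:ℕ) < k*n) :=
        fun x _ y _ hxy => Finset.disjoint_filter_filter (hdisj x y hxy)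
      calc (∑ i, ((A i).filter fun j : Fin (k*n+1) => (j:ℕ) < k*n).card)
          = (univ.biUnion fun i => (A i).filter fun j : Fin (k*n+1) => (j:ℕ) < k*n).card :=
            (Finset.card_biUnion hdisjF).symm
        _ ≤ ((univ : Finset (Fin (k*n+1))).filter fun j : Fin (k*n+1) => (j:ℕ) < k*n).card := by
            apply Finset.card_le_card
            intro a ha
            simp only [Finset.mem_biUnion, Finset.mem_filter] at ha ⊢
            obtain ⟨i, _, _, h⟩ := ha
            exact ⟨Finset.mem_univ a, h⟩
        _ = k*n := card_filter_lt_fin (k*n)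
    set p : Fin n := ⟨n-2, by omega⟩ with hpdef
    set q : Fin n := ⟨n-1, by omega⟩ with hqdef
    have hpq : p ≠ q := by
      simp only [hpdef, hqdef, Ne, Fin.mk.injEq]
      omega
    have hcard_sdiff : ((univ \ {p,q} : Finset (Fin n))).card = n - 2 := by
      rw [Finset.card_sdiff_of_subset (Finset.subset_univ _), Finset.card_pair hpq, Finset.card_univ,
        Fintype.card_fin]
    have hlow : (n-2) * k ≤ ∑ x ∈ (univ \ {p,q} : Finset (Fin n)),
        ((A x).filter fun j : Fin (k*n+1) => (j:ℕ) < k*n).card := by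
      have h := Finset.card_nsmul_le_sum (univ \ {p,q} : Finset (Fin n))
        (fun x => ((A x).filter fun j : Fin (k*n+1) => (j:ℕ) < k*n).card) k ?_
      · rwa [hcard_sdiff, smul_eq_mul] at h
      · intro x hx
        simp only [Finset.mem_sdiff, Finset.mem_insert, Finset.mem_singleton] at hx
        apply htype1
        have h1 : x.val ≠ n-2 := fun h => hx.2 (Or.inl (by rw [hpdef]; exact Fin.ext h))
        have h2 : x.val ≠ n-1 := fun h => hx.2 (Or.inr (by rw [hqdef]; exact Fin.ext h))
        have := x.isLt
        omega
    have h2k : ((A p).filter fun j : Fin (k*n+1) => (j:ℕ) < k*n).card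
        + ((A q).filter fun j : Fin (k*n+1) => (j:ℕ) < k*n).card ≤ 2 * k := by
      have hsplit := Finset.sum_sdiff (f := fun x =>
        ((A x).filter fun j : Fin (k*n+1) => (j:ℕ) < k*n).card)
        (Finset.subset_univ ({p,q} : Finset (Fin n)))
      have hpair : (∑ x ∈ ({p,q} : Finset (Fin n)),
          ((A x).filter fun j : Fin (k*n+1) => (j:ℕ) < k*n).card)
          = ((A p).filter fun j : Fin (k*n+1) => (j:ℕ) < k*n).card
            + ((A q).filter fun j : Fin (k*n+1) => (j:ℕ) < k*n).card := Finset.sum_pair hpq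
      have h1 : (n-2)*k + (((A p).filter fun j : Fin (k*n+1) => (j:ℕ) < k*n).card
          + ((A q).filter fun j : Fin (k*n+1) => (j:ℕ) < k*n).card) ≤ k*n := by
        rw [← hpair]
        calc (n-2)*k + (∑ x ∈ ({p,q} : Finset (Fin n)),
              ((A x).filter fun j : Fin (k*n+1) => (j:ℕ) < k*n).card)
            ≤ (∑ x ∈ (univ \ {p,q} : Finset (Fin n)),
              ((A x).filter fun j : Fin (k*n+1) => (j:ℕ) < k*n).card)
              + (∑ x ∈ ({p,q} : Finset (Fin n)),
              ((A x).filter fun j : Fin (k*n+1) => (j:ℕ) < k*n).card) :=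
              Nat.add_le_add_right hlow _
          _ = ∑ x, ((A x).filter fun j : Fin (k*n+1) => (j:ℕ) < k*n).card := hsplit
          _ ≤ k*n := hsumle
      have h2 : (n-2)*k + 2*k = k*n := by
        rw [← Nat.add_mul, Nat.sub_add_cancel (by omega : 2 ≤ n), Nat.mul_comm]
      exact Nat.le_of_add_le_add_left (h1.trans_eq h2.symm)
    -- the type-2 agent without the last item
    have hfinal : ∀ t : Fin n, n-2 ≤ t.val →
        (⟨k*n, Nat.lt_succ_self _⟩ : Fin (k*n+1)) ∉ A t →
        ((A t).filter fun j : Fin (k*n+1) => (j:ℕ) < k*n).card ≤ 2*k →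
        egalW n (k*n+1) v A ≤ 2 / (n:ℝ)^(k+1) := by
      intro t ht hLt hc
      have hempty : ((A t).filter fun j : Fin (k*n+1) => ¬ (j:ℕ) < k*n) = ∅ := by
        rw [Finset.filter_eq_empty_iff]
        intro j hj hcon
        have hje : (j:ℕ) = k*n := Nat.le_antisymm (Nat.lt_succ_iff.1 j.isLt) (Nat.not_lt.1 hcon)
        exact hLt (by rwa [show j = (⟨k*n, Nat.lt_succ_self _⟩ : Fin (k*n+1)) from Fin.ext hje] at hj)
      have hval : bundleVal (v t) (A t)
          = ((((A t).filter fun j : Fin (k*n+1) => (j:ℕ) < k*n).card : ℕ) : ℝ)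
            * (1/((k:ℝ)*(n:ℝ)^(k+1))) := by
        rw [bundleVal_ite (v t) (A t) _ _ (fun j _ => hv2 t ht j), hempty]
        simp
      have hle : egalW n (k*n+1) v A ≤ bundleVal (v t) (A t) :=
        ciInf_le (Finite.bddBelow_range _) t
      refine le_trans hle ?_
      rw [hval]
      have hcast : ((((A t).filter fun j : Fin (k*n+1) => (j:ℕ) < k*n).card : ℕ) : ℝ)
          ≤ 2*(k:ℝ) := by exact_mod_cast hc
      calc ((((A t).filter fun j : Fin (k*n+1) => (j:ℕ) < k*n).card : ℕ) : ℝ)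
            * (1/((k:ℝ)*(n:ℝ)^(k+1)))
          ≤ (2*(k:ℝ)) * (1/((k:ℝ)*(n:ℝ)^(k+1))) :=
            mul_le_mul_of_nonneg_right hcast (by positivity)
        _ = 2/(n:ℝ)^(k+1) := by
            field_simp
    by_cases hL : (⟨k*n, Nat.lt_succ_self _⟩ : Fin (k*n+1)) ∈ A p
    · refine hfinal q (by simp only [hqdef]; omega) ?_ (by omega)
      intro hq
      exact (Finset.disjoint_left.1 (hdisj p q hpq) hL) hq
    · exact hfinal p (by simp only [hpdef]; exact le_refl _) hL (by omega)
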